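/- Let G be a uv-straight graph, let b and c be distinct vertices of G with h(b) ≤ h(c), let S be a monotone uc-path of G and T a monotone bv-path of G such that S minus c is anticomplete to T and S is anticomplete to T minus b. Let G_{c,b} be the subgraph of G induced by ({x ∈ V(G) : h(b) ≤ h(x) ≤ h(c)}) \ ((N_G[S−c] ∪ N_G[T−b]) \ {c,b}). If Q is a shortest cb-path of G_{c,b}, then the concatenation of S, Q, and T is a uv-trail of G. -/

import Mathlib

open SimpleGraph

variable {V : Type*}

/-- A walk is monotone if its vertices have pairwise distinct heights. -/
def MonoWalk (G : SimpleGraph V) (u : V) {x y : V} (W : G.Walk x y) : Prop :=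
  (W.support.map (fun z => G.dist u z)).Nodup

/-- `P` is a shortest `x`-`y` path of `G`. -/
def IsShortestPath (G : SimpleGraph V) {x y : V} (P : G.Walk x y) : Prop :=
  P.IsPath ∧ P.length = G.dist x y

/-- `P` is an induced path of `G`: a path that equals the subgraph of `G`
induced by its vertex set. -/
def IsInducedPath (G : SimpleGraph V) {x y : V} (P : G.Walk x y) : Prop :=
  P.IsPath ∧ ∀ a b : V, a ∈ P.support → b ∈ P.support → G.Adj a b → P.toSubgraph.Adj a b

/-- A `uv`-trail of `G`: an induced `uv`-path of `G` that is not a shortest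
`uv`-path of `G`. -/
def IsTrailPath (G : SimpleGraph V) (u v : V) (P : G.Walk u v) : Prop :=
  IsInducedPath G P ∧ ¬ IsShortestPath G P

/-- A shortest `uv`-trail of `G`: a `uv`-trail of minimum number of edges. -/
def IsShortestTrail (G : SimpleGraph V) (u v : V) (P : G.Walk u v) : Prop :=
  IsTrailPath G u v P ∧ ∀ Q : G.Walk u v, IsTrailPath G u v Q → P.length ≤ Q.length

/-- `G` is `uv`-straight: every vertex lies on a shortest `uv`-path of `G`. -/
def Straight (G : SimpleGraph V) (u v : V) : Prop :=
  ∀ x : V, ∃ P : G.Walk u v, IsShortestPath G P ∧ x ∈ P.support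

/-- Vertex sets `X` and `Y` are anticomplete in `G`: they are disjoint and there
is no edge of `G` between them. -/
def Anticomplete (G : SimpleGraph V) (X Y : Set V) : Prop :=
  ∀ x ∈ X, ∀ y ∈ Y, x ≠ y ∧ ¬ G.Adj x y

/-- `x` and `y` are connected in the subgraph of `G` induced by `A`. -/
def ConnIn (G : SimpleGraph V) (A : Set V) (x y : V) : Prop :=
  ∃ W : G.Walk x y, ∀ z ∈ W.support, z ∈ A

/-- The closed neighborhood `N_G[A]` of a vertex set `A`. -/
def closedNbhd (G : SimpleGraph V) (A : Set V) : Set V :=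
  {y | y ∈ A ∨ ∃ x ∈ A, G.Adj x y}

/-- `(s, t)` is the twist pair of the `uv`-path `P`: `P[u,s]` is the maximal
monotone prefix of `P` and `P[t,v]` is the maximal monotone suffix of `P`. -/
def IsTwistPair [DecidableEq V] (G : SimpleGraph V) (u v : V) (P : G.Walk u v)
    (s t : V) : Prop :=
  ∃ (hs : s ∈ P.support) (ht : t ∈ P.support),
    MonoWalk G u (P.takeUntil s hs) ∧ MonoWalk G u (P.dropUntil t ht) ∧
    (∀ (s' : V) (hs' : s' ∈ P.support), MonoWalk G u (P.takeUntil s' hs') →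
      (P.takeUntil s' hs').length ≤ (P.takeUntil s hs).length) ∧
    (∀ (t' : V) (ht' : t' ∈ P.support), MonoWalk G u (P.dropUntil t' ht') →
      (P.dropUntil t' ht').length ≤ (P.dropUntil t ht).length)

/-- `(W1, W2)` is a pair of wings for the quadruple `(a, b, c, d)` in `G`
(with respect to heights measured from `u`): `W1` is a monotone `c`-`a*`-path
containing `a`, `W2` is a monotone `b`-`d*`-path containing `d`,
`h(a*) + 1 = h(a) = h(b) ≤ h(c) = h(d) = h(d*) - 1`, `W1 - c` is anticomplete
to `W2`, and `W1` is anticomplete to `W2 - b`. -/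
def IsWingPair (G : SimpleGraph V) (u : V) (a b c d : V) {astar dstar : V}
    (W1 : G.Walk c astar) (W2 : G.Walk b dstar) : Prop :=
  W1.IsPath ∧ W2.IsPath ∧ MonoWalk G u W1 ∧ MonoWalk G u W2 ∧
  a ∈ W1.support ∧ d ∈ W2.support ∧
  G.dist u astar + 1 = G.dist u a ∧ G.dist u a = G.dist u b ∧
  G.dist u b ≤ G.dist u c ∧ G.dist u c = G.dist u d ∧
  G.dist u d + 1 = G.dist u dstar ∧
  Anticomplete G {x | x ∈ W1.support ∧ x ≠ c} {x | x ∈ W2.support} ∧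
  Anticomplete G {x | x ∈ W1.support} {x | x ∈ W2.support ∧ x ≠ b}

/-- The quadruple `(a, b, c, d)` is winged in `G`. -/
def Winged (G : SimpleGraph V) (u : V) (a b c d : V) : Prop :=
  ∃ (astar dstar : V) (W1 : G.Walk c astar) (W2 : G.Walk b dstar),
    IsWingPair G u a b c d W1 W2

/-- The quadruple `(a, b, c, d)` admits a pair of wings `(W1, W2)` in `G` with
`W1` anticomplete to `W2`. -/
def WingedAnti (G : SimpleGraph V) (u : V) (a b c d : V) : Prop :=
  ∃ (astar dstar : V) (W1 : G.Walk c astar) (W2 : G.Walk b dstar),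
    IsWingPair G u a b c d W1 W2 ∧
    Anticomplete G {x | x ∈ W1.support} {x | x ∈ W2.support}

/-- For a `uv`-trail `P` of a `uv`-straight graph `G` with twist pair `(s, t)`,
a monotone `uc`-path `S` of `G` with `h(c) = h(s)` is a sidetrack for `P` if
(S1) `G` contains a monotone `tv`-path `T` with `S - c` anticomplete to `T` and
`S` anticomplete to `T - t`, and (S2) `S` contains the vertex `a` of `P[u,s]`
with `h(a) = h(t)`. -/
def IsSidetrack [DecidableEq V] (G : SimpleGraph V) (u v : V) (P : G.Walk u v)
    (s t : V) {c : V} (S : G.Walk u c) : Prop :=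
  S.IsPath ∧ MonoWalk G u S ∧ G.dist u c = G.dist u s ∧
  (∃ (T : G.Walk t v), T.IsPath ∧ MonoWalk G u T ∧
    Anticomplete G {x | x ∈ S.support ∧ x ≠ c} {x | x ∈ T.support} ∧
    Anticomplete G {x | x ∈ S.support} {x | x ∈ T.support ∧ x ≠ t}) ∧
  (∀ (hs : s ∈ P.support) (a : V),
    a ∈ (P.takeUntil s hs).support → G.dist u a = G.dist u t → a ∈ S.support)

section Statement7Helpers

variable {G : SimpleGraph V}

private lemma st7_support_getVert {a b : V} (p : G.Walk a b) :
    p.support = (List.range (p.length + 1)).map p.getVert := by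
  induction p with
  | nil => simp [List.range_succ]
  | cons h q ih =>
    rw [Walk.support_cons, Walk.length_cons, ih]
    have hr : List.range (q.length + 1 + 1) = 0 :: (List.range (q.length + 1)).map Nat.succ :=
      List.range_succ_eq_map
    rw [hr, List.map_cons, List.map_map]
    rfl

private lemma st7_mono_dist_ne {u a b : V} {W : G.Walk a b}
    (hW : MonoWalk G u W) {i j : ℕ} (hi : i ≤ W.length) (hj : j ≤ W.length)
    (hij : i ≠ j) : G.dist u (W.getVert i) ≠ G.dist u (W.getVert j) := by
  have h := hW
  unfold MonoWalk at h
  rw [st7_support_getVert, List.map_map] at h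
  have hinj := (List.nodup_map_iff_inj_on List.nodup_range).mp h
  intro heq
  exact hij (hinj i (List.mem_range.mpr (by omega)) j (List.mem_range.mpr (by omega)) heq)

private lemma st7_mono_length (hconn : G.Connected) {u a b : V}
    {W : G.Walk a b} (hW : MonoWalk G u W) :
    (W.length : ℤ) = |(G.dist u b : ℤ) - (G.dist u a : ℤ)| := by
  rcases Nat.eq_zero_or_pos W.length with h0 | hpos
  · have hab := Walk.eq_of_length_eq_zero h0
    subst hab
    rw [h0]; simp
  · set g : ℕ → ℤ := fun i => (G.dist u (W.getVert i) : ℤ) with hg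
    have hstep : ∀ i < W.length, g (i + 1) = g i + 1 ∨ g (i + 1) = g i - 1 := by
      intro i hi
      have hadj := W.adj_getVert_succ hi
      have h1 : G.dist u (W.getVert (i + 1)) ≤ G.dist u (W.getVert i) + 1 := by
        have ht := hconn.dist_triangle (u := u) (v := W.getVert i) (w := W.getVert (i + 1))
        rwa [dist_eq_one_iff_adj.mpr hadj] at ht
      have h2 : G.dist u (W.getVert i) ≤ G.dist u (W.getVert (i + 1)) + 1 := by
        have ht := hconn.dist_triangle (u := u) (v := W.getVert (i + 1)) (w := W.getVert i)
        rwa [dist_eq_one_iff_adj.mpr hadj.symm] at ht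
      have hne := st7_mono_dist_ne hW (i := i) (j := i + 1) (by omega) (by omega) (by omega)
      simp only [hg]
      omega
    have hdir : ∀ i < W.length, g (i + 1) - g i = g 1 - g 0 := by
      intro i
      induction i with
      | zero => intro _; ring
      | succ k ih =>
        intro hi
        have h1 := hstep k (by omega)
        have h2 := hstep (k + 1) hi
        have h3 := ih (by omega)
        have hne := st7_mono_dist_ne hW (i := k) (j := k + 1 + 1) (by omega) (by omega) (by omega)
        have hne' : g (k + 1 + 1) ≠ g k := by
          simp only [hg]
          exact_mod_cast fun hh => hne (by exact_mod_cast hh.symm)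
        rcases h1 with h1 | h1 <;> rcases h2 with h2 | h2 <;> omega
    have htel : ∀ n, n ≤ W.length → g n - g 0 = n * (g 1 - g 0) := by
      intro n
      induction n with
      | zero => intro _; simp
      | succ k ih =>
        intro hk
        have hd := hdir k (by omega)
        have hi := ih (by omega)
        have hring : ((k : ℤ) + 1) * (g 1 - g 0) = k * (g 1 - g 0) + (g 1 - g 0) := by ring
        push_cast
        rw [hring]
        omega
    have habs : |g 1 - g 0| = 1 := by
      rcases hstep 0 hpos with h | h <;> rw [zero_add] at h <;> rw [h] <;> simp
    have hfin := htel W.length le_rfl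
    have hb' : g W.length = (G.dist u b : ℤ) := by simp [hg, Walk.getVert_length]
    have ha' : g 0 = (G.dist u a : ℤ) := by simp [hg, Walk.getVert_zero]
    rw [← hb', ← ha', hfin, abs_mul, habs, mul_one, Nat.abs_cast]

private lemma st7_mono_shortest (hconn : G.Connected) {u a b : V}
    {W : G.Walk a b} (hW : MonoWalk G u W) : W.length = G.dist a b := by
  refine le_antisymm ?_ (SimpleGraph.dist_le W)
  have h1 : G.dist u b ≤ G.dist u a + G.dist a b := hconn.dist_triangle
  have h2 : G.dist u a ≤ G.dist u b + G.dist a b := by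
    have ht := hconn.dist_triangle (u := u) (v := b) (w := a)
    rwa [dist_comm (u := b)] at ht
  have h3 := st7_mono_length hconn hW
  rcases abs_cases ((G.dist u b : ℤ) - (G.dist u a : ℤ)) with ⟨he, -⟩ | ⟨he, -⟩ <;>
    rw [he] at h3 <;> omega

private lemma st7_split {a b : V} (p : G.Walk a b) (i : ℕ)
    (hi : i ≤ p.length) {x : V} (hx : p.getVert i = x) :
    ∃ (q : G.Walk a x) (r : G.Walk x b), q.length = i ∧ q.length + r.length = p.length ∧
      (∀ z ∈ q.support, z ∈ p.support) ∧ (∀ z ∈ r.support, z ∈ p.support) := by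
  induction p generalizing i with
  | nil =>
    have hi0 : i = 0 := by simpa using hi
    subst hi0
    rw [Walk.getVert_zero] at hx
    subst hx
    exact ⟨Walk.nil, Walk.nil, rfl, rfl, fun z hz => hz, fun z hz => hz⟩
  | cons h q ih =>
    cases i with
    | zero =>
      rw [Walk.getVert_zero] at hx
      subst hx
      refine ⟨Walk.nil, Walk.cons h q, rfl, by simp, ?_, fun z hz => hz⟩
      intro z hz
      simp only [Walk.support_nil, List.mem_singleton] at hz
      subst hz
      exact Walk.start_mem_support _
    | succ j =>
      have hj : j ≤ q.length := by
        rw [Walk.length_cons] at hi; omega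
      rw [Walk.getVert_cons_succ] at hx
      obtain ⟨q1, r1, h1, h2, h3, h4⟩ := ih j hj hx
      refine ⟨Walk.cons h q1, r1, by simp [h1], ?_, ?_, ?_⟩
      · rw [Walk.length_cons, Walk.length_cons]; omega
      · intro z hz
        rw [Walk.support_cons, List.mem_cons] at hz
        rcases hz with rfl | hz
        · exact Walk.start_mem_support _
        · rw [Walk.support_cons]
          exact List.mem_cons_of_mem _ (h3 z hz)
      · intro z hz
        rw [Walk.support_cons]
        exact List.mem_cons_of_mem _ (h4 z hz)

private lemma st7_min_induced_aux {A : Set V} {c b : V} {Q : G.Walk c b}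
    (hQA : ∀ z ∈ Q.support, z ∈ A)
    (hQmin : ∀ Q' : G.Walk c b, (∀ z ∈ Q'.support, z ∈ A) → Q.length ≤ Q'.length)
    {x y : V} {i j : ℕ} (hij : i < j) (hjl : j ≤ Q.length)
    (hix : Q.getVert i = x) (hjy : Q.getVert j = y) (hxy : G.Adj x y) :
    Q.toSubgraph.Adj x y := by
  obtain ⟨q1, r1, hq1len, hq1tot, hq1sup, -⟩ := st7_split Q i (by omega) hix
  obtain ⟨q2, r2, hq2len, hq2tot, -, hr2sup⟩ := st7_split Q j hjl hjy
  have hsup : ∀ z ∈ (q1.append (Walk.cons hxy r2)).support, z ∈ A := by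
    intro z hz
    rw [Walk.mem_support_append_iff] at hz
    rcases hz with hz | hz
    · exact hQA z (hq1sup z hz)
    · rw [Walk.support_cons, List.mem_cons] at hz
      rcases hz with rfl | hz
      · refine hQA z ?_
        rw [← hix]
        exact Walk.mem_support_iff_exists_getVert.mpr ⟨i, rfl, by omega⟩
      · exact hQA z (hr2sup z hz)
  have hmin := hQmin (q1.append (Walk.cons hxy r2)) hsup
  rw [Walk.length_append, Walk.length_cons, hq1len] at hmin
  have hj1 : j = i + 1 := by omega
  subst hj1
  have hadj := Q.toSubgraph_adj_getVert (i := i) (by omega)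
  rw [hix, hjy] at hadj
  exact hadj

private lemma st7_min_induced {A : Set V} {c b : V} {Q : G.Walk c b}
    (hQA : ∀ z ∈ Q.support, z ∈ A)
    (hQmin : ∀ Q' : G.Walk c b, (∀ z ∈ Q'.support, z ∈ A) → Q.length ≤ Q'.length)
    {x y : V} (hx : x ∈ Q.support) (hy : y ∈ Q.support) (hxy : G.Adj x y) :
    Q.toSubgraph.Adj x y := by
  obtain ⟨i, hix, hil⟩ := Walk.mem_support_iff_exists_getVert.mp hx
  obtain ⟨j, hjy, hjl⟩ := Walk.mem_support_iff_exists_getVert.mp hy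
  rcases lt_trichotomy i j with h | h | h
  · exact st7_min_induced_aux hQA hQmin h hjl hix hjy hxy
  · exfalso; apply hxy.ne; rw [← hix, ← hjy, h]
  · exact (st7_min_induced_aux hQA hQmin h hil hjy hix hxy.symm).symm

private lemma st7_isPath_append {a m b : V} {p : G.Walk a m}
    {q : G.Walk m b} (hp : p.IsPath) (hq : q.IsPath)
    (h : ∀ x, x ∈ p.support → x ∈ q.support → x = m) : (p.append q).IsPath := by
  rw [Walk.isPath_def, Walk.support_append, List.nodup_append]
  have hqn := hq.support_nodup
  rw [Walk.support_eq_cons, List.nodup_cons] at hqn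
  refine ⟨hp.support_nodup, hqn.2, ?_⟩
  intro x hxp y hxq hxy
  subst hxy
  have hxq' := List.mem_of_mem_tail hxq
  have hxm := h x hxp hxq'
  subst hxm
  exact hqn.1 hxq

end Statement7Helpers

/-- Let `b ≠ c` be vertices of a `uv`-straight graph `G` with
`h(b) ≤ h(c)`, let `S` be a monotone `uc`-path and `T` a monotone `bv`-path of
`G` with `S - c` anticomplete to `T` and `S` anticomplete to `T - b`, and let
`G_{c,b}` be the subgraph of `G` induced by
`{x : h(b) ≤ h(x) ≤ h(c)} \ ((N_G[S-c] ∪ N_G[T-b]) \ {c, b})`. If `Q` is a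
shortest `cb`-path of `G_{c,b}`, then the concatenation of `S`, `Q`, and `T` is
a `uv`-trail of `G`. -/
theorem statement7 [Fintype V] [DecidableEq V] (G : SimpleGraph V) (u v : V)
    (hstraight : Straight G u v)
    (b c : V) (hbc : b ≠ c) (hheight : G.dist u b ≤ G.dist u c)
    (S : G.Walk u c) (hSpath : S.IsPath) (hSmono : MonoWalk G u S)
    (T : G.Walk b v) (hTpath : T.IsPath) (hTmono : MonoWalk G u T)
    (hanti1 : Anticomplete G {x | x ∈ S.support ∧ x ≠ c} {x | x ∈ T.support})
    (hanti2 : Anticomplete G {x | x ∈ S.support} {x | x ∈ T.support ∧ x ≠ b})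
    (A : Set V)
    (hA : A = {x | G.dist u b ≤ G.dist u x ∧ G.dist u x ≤ G.dist u c} \
      ((closedNbhd G {x | x ∈ S.support ∧ x ≠ c} ∪
        closedNbhd G {x | x ∈ T.support ∧ x ≠ b}) \ {c, b}))
    (Q : G.Walk c b) (hQpath : Q.IsPath) (hQA : ∀ z ∈ Q.support, z ∈ A)
    (hQmin : ∀ Q' : G.Walk c b, (∀ z ∈ Q'.support, z ∈ A) →
      Q.length ≤ Q'.length) :
    IsTrailPath G u v (S.append (Q.append T)) := by
  have hreach : ∀ x, G.Reachable u x := fun x => by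
    obtain ⟨P, hP, hx⟩ := hstraight x
    exact ⟨P.takeUntil x hx⟩
  have hconn : G.Connected := by
    rw [connected_iff]
    exact ⟨fun a b => (hreach a).symm.trans (hreach b), ⟨u⟩⟩
  have hcS : c ∈ S.support := S.end_mem_support
  have hbT : b ∈ T.support := T.start_mem_support
  have hcQ : c ∈ Q.support := Q.start_mem_support
  have hbQ : b ∈ Q.support := Q.end_mem_support
  have hcb : c ≠ b := hbc.symm
  have hST : ∀ x, x ∈ S.support → x ∈ T.support → False := by
    intro x hxS hxT
    by_cases hxc : x = c
    · subst hxc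
      exact (hanti2 x hxS x ⟨hxT, hcb⟩).1 rfl
    · exact (hanti1 x ⟨hxS, hxc⟩ x hxT).1 rfl
  have hQfree : ∀ z ∈ Q.support, z ≠ c → z ≠ b →
      z ∉ closedNbhd G {x | x ∈ S.support ∧ x ≠ c} ∧
      z ∉ closedNbhd G {x | x ∈ T.support ∧ x ≠ b} := by
    intro z hz hzc hzb
    have hzA := hQA z hz
    rw [hA] at hzA
    obtain ⟨-, hz2⟩ := hzA
    have hznot : z ∉ ({c, b} : Set V) := by simp [hzc, hzb]
    constructor
    · intro hmem
      exact hz2 ⟨Or.inl hmem, hznot⟩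
    · intro hmem
      exact hz2 ⟨Or.inr hmem, hznot⟩
  have hSQ : ∀ x, x ∈ S.support → x ∈ Q.support → x = c := by
    intro x hxS hxQ
    by_contra hxc
    have hxb : x ≠ b := fun h => hST x hxS (h ▸ hbT)
    exact (hQfree x hxQ hxc hxb).1 (Or.inl ⟨hxS, hxc⟩)
  have hTQ : ∀ x, x ∈ T.support → x ∈ Q.support → x = b := by
    intro x hxT hxQ
    by_contra hxb
    have hxc : x ≠ c := fun h => hST x (h ▸ hcS) hxT
    exact (hQfree x hxQ hxc hxb).2 (Or.inl ⟨hxT, hxb⟩)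
  have hQT : (Q.append T).IsPath :=
    st7_isPath_append hQpath hTpath (fun x hxQ hxT => hTQ x hxT hxQ)
  have hPpath : (S.append (Q.append T)).IsPath := by
    refine st7_isPath_append hSpath hQT ?_
    intro x hxS hx
    rw [Walk.mem_support_append_iff] at hx
    rcases hx with hx | hx
    · exact hSQ x hxS hx
    · exact (hST x hxS hx).elim
  have hSind : ∀ x y, x ∈ S.support → y ∈ S.support → G.Adj x y → S.toSubgraph.Adj x y := by
    intro x y hx hy hxy
    exact st7_min_induced (A := Set.univ) (fun z _ => Set.mem_univ z)
      (fun Q' _ => by rw [st7_mono_shortest hconn hSmono]; exact SimpleGraph.dist_le Q') hx hy hxy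
  have hTind : ∀ x y, x ∈ T.support → y ∈ T.support → G.Adj x y → T.toSubgraph.Adj x y := by
    intro x y hx hy hxy
    exact st7_min_induced (A := Set.univ) (fun z _ => Set.mem_univ z)
      (fun Q' _ => by rw [st7_mono_shortest hconn hTmono]; exact SimpleGraph.dist_le Q') hx hy hxy
  have hQind : ∀ x y, x ∈ Q.support → y ∈ Q.support → G.Adj x y → Q.toSubgraph.Adj x y :=
    fun x y hx hy hxy => st7_min_induced hQA hQmin hx hy hxy
  have hliftS : ∀ {x y : V}, S.toSubgraph.Adj x y →
      (S.append (Q.append T)).toSubgraph.Adj x y := by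
    intro x y h
    rw [Walk.toSubgraph_append]
    exact Subgraph.sup_adj.mpr (Or.inl h)
  have hliftQ : ∀ {x y : V}, Q.toSubgraph.Adj x y →
      (S.append (Q.append T)).toSubgraph.Adj x y := by
    intro x y h
    rw [Walk.toSubgraph_append, Walk.toSubgraph_append]
    exact Subgraph.sup_adj.mpr (Or.inr (Subgraph.sup_adj.mpr (Or.inl h)))
  have hliftT : ∀ {x y : V}, T.toSubgraph.Adj x y →
      (S.append (Q.append T)).toSubgraph.Adj x y := by
    intro x y h
    rw [Walk.toSubgraph_append, Walk.toSubgraph_append]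
    exact Subgraph.sup_adj.mpr (Or.inr (Subgraph.sup_adj.mpr (Or.inr h)))
  have hSQadj : ∀ x y, x ∈ S.support → y ∈ Q.support → G.Adj x y →
      (S.append (Q.append T)).toSubgraph.Adj x y := by
    intro x y hx hy hxy
    by_cases hxc : x = c
    · subst hxc
      exact hliftQ (hQind _ _ hcQ hy hxy)
    · by_cases hyc : y = c
      · subst hyc
        exact hliftS (hSind _ _ hx hcS hxy)
      · by_cases hyb : y = b
        · subst hyb
          exact ((hanti1 x ⟨hx, hxc⟩ y hbT).2 hxy).elim
        · exact ((hQfree y hy hyc hyb).1 (Or.inr ⟨x, ⟨hx, hxc⟩, hxy⟩)).elim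
  have hTQadj : ∀ x y, x ∈ T.support → y ∈ Q.support → G.Adj x y →
      (S.append (Q.append T)).toSubgraph.Adj x y := by
    intro x y hx hy hxy
    by_cases hxb : x = b
    · subst hxb
      exact hliftQ (hQind _ _ hbQ hy hxy)
    · by_cases hyb : y = b
      · subst hyb
        exact hliftT (hTind _ _ hx hbT hxy)
      · by_cases hyc : y = c
        · subst hyc
          exact ((hanti2 y hcS x ⟨hx, hxb⟩).2 hxy.symm).elim
        · exact ((hQfree y hy hyc hyb).2 (Or.inr ⟨x, ⟨hx, hxb⟩, hxy⟩)).elim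
  have hSTadj : ∀ x y, x ∈ S.support → y ∈ T.support → G.Adj x y →
      (S.append (Q.append T)).toSubgraph.Adj x y := by
    intro x y hx hy hxy
    by_cases hxc : x = c
    · subst hxc
      by_cases hyb : y = b
      · subst hyb
        exact hliftQ (hQind _ _ hcQ hbQ hxy)
      · exact ((hanti2 x hcS y ⟨hy, hyb⟩).2 hxy).elim
    · exact ((hanti1 x ⟨hx, hxc⟩ y hy).2 hxy).elim
  refine ⟨⟨hPpath, ?_⟩, ?_⟩
  · intro x y hx hy hxy
    have hmem : ∀ z, z ∈ (S.append (Q.append T)).support →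
        z ∈ S.support ∨ z ∈ Q.support ∨ z ∈ T.support := by
      intro z hz
      rw [Walk.mem_support_append_iff, Walk.mem_support_append_iff] at hz
      tauto
    rcases hmem x hx with hxS | hxQ | hxT <;> rcases hmem y hy with hyS | hyQ | hyT
    · exact hliftS (hSind _ _ hxS hyS hxy)
    · exact hSQadj _ _ hxS hyQ hxy
    · exact hSTadj _ _ hxS hyT hxy
    · exact (hSQadj _ _ hyS hxQ hxy.symm).symm
    · exact hliftQ (hQind _ _ hxQ hyQ hxy)
    · exact (hTQadj _ _ hyT hxQ hxy.symm).symm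
    · exact (hSTadj _ _ hyS hxT hxy.symm).symm
    · exact hTQadj _ _ hxT hyQ hxy
    · exact hliftT (hTind _ _ hxT hyT hxy)
  · rintro ⟨-, hlen⟩
    have h1 : G.dist u v ≤ G.dist u b + G.dist b v := hconn.dist_triangle
    have h2 : G.dist b v ≤ T.length := SimpleGraph.dist_le T
    have h3 : G.dist u c ≤ S.length := SimpleGraph.dist_le S
    have h4 : 1 ≤ Q.length :=
      Nat.one_le_iff_ne_zero.mpr (fun h => hbc (Walk.eq_of_length_eq_zero h).symm)
    rw [Walk.length_append, Walk.length_append] at hlen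
    omega
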